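/- For every t ∈ (0,1) and every y ∈ ℝ^d, the function g(t, y) := log ρ_t(√(1−t) y) satisfies ∂g/∂t (t, y) = −d/(2t) + (1/(2t²)) ∫ ‖y − x₀‖₂² p_{X₀|X_t}(dx₀ | √(1−t) y), where p_{X₀|X_t}(dx₀ | x) denotes the conditional law of X₀ given X_t = x. -/

import Mathlib

open MeasureTheory Real Filter
open scoped ENNReal

noncomputable section

/-- Density at `x` of the Gaussian distribution `N(√(1-t)·x₀, t·I_d)`, i.e. the transition
density of `X_t = √(1-t)·X₀ + √t·Z` given `X₀ = x₀`. -/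
def heatKernel (d : ℕ) (t : ℝ) (x x₀ : EuclideanSpace ℝ (Fin d)) : ℝ :=
  (2 * π * t) ^ (-(d : ℝ) / 2) * Real.exp (-‖x - Real.sqrt (1 - t) • x₀‖ ^ 2 / (2 * t))

/-- The density `ρ_t` of `X_t = √(1-t)·X₀ + √t·Z` where `X₀ ∼ μ` and `Z ∼ N(0, I_d)`
is independent of `X₀`. -/
def rho (d : ℕ) (μ : Measure (EuclideanSpace ℝ (Fin d))) (t : ℝ)
    (x : EuclideanSpace ℝ (Fin d)) : ℝ :=
  ∫ x₀, heatKernel d t x x₀ ∂μ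

/-- Density of the standard Gaussian `N(0, I_d)` on `ℝ^d`. -/
def stdGaussianDensity (d : ℕ) (z : EuclideanSpace ℝ (Fin d)) : ℝ :=
  (2 * π) ^ (-(d : ℝ) / 2) * Real.exp (-‖z‖ ^ 2 / 2)

/-- Conditional expectation `E[f(X_t) | X₀ = x₀] = E_{Z ∼ N(0,I_d)}[f(√(1-t)·x₀ + √t·Z)]`. -/
def condExpX0 (d : ℕ) (t : ℝ) (x₀ : EuclideanSpace ℝ (Fin d))
    (f : EuclideanSpace ℝ (Fin d) → ℝ) : ℝ :=
  ∫ z, f (Real.sqrt (1 - t) • x₀ + Real.sqrt t • z) * stdGaussianDensity d z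

def hker (d : ℕ) (s r : ℝ) : ℝ :=
  (2 * π * s) ^ (-(d : ℝ) / 2) * Real.exp (-(1 - s) * r / (2 * s))

lemma hker_pos {d : ℕ} {s : ℝ} (hs : 0 < s) (r : ℝ) : 0 < hker d s r := by
  unfold hker; positivity

lemma heatKernel_self {d : ℕ} {s : ℝ} (hs : s ≤ 1) (y x₀ : EuclideanSpace ℝ (Fin d)) :
    heatKernel d s (Real.sqrt (1 - s) • y) x₀ = hker d s (‖y - x₀‖ ^ 2) := by
  unfold heatKernel hker
  congr 1
  rw [← smul_sub, norm_smul, Real.norm_eq_abs,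
    abs_of_nonneg (Real.sqrt_nonneg _), mul_pow, Real.sq_sqrt (by linarith)]
  ring_nf

lemma hker_le {d : ℕ} {s r : ℝ} (hs₀ : 0 < s) (hs₁ : s ≤ 1) (hr : 0 ≤ r) :
    hker d s r ≤ (2 * π * s) ^ (-(d : ℝ) / 2) := by
  unfold hker
  have h0 : 0 ≤ (1 - s) * r := mul_nonneg (by linarith) hr
  have : Real.exp (-(1 - s) * r / (2 * s)) ≤ 1 := by
    rw [Real.exp_le_one_iff]
    exact div_nonpos_of_nonpos_of_nonneg (by nlinarith) (by positivity)
  calc (2 * π * s) ^ (-(d : ℝ) / 2) * Real.exp (-(1 - s) * r / (2 * s))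
      ≤ (2 * π * s) ^ (-(d : ℝ) / 2) * 1 := by
        apply mul_le_mul_of_nonneg_left this (by positivity)
    _ = (2 * π * s) ^ (-(d : ℝ) / 2) := by ring

lemma hasDerivAt_hker (d : ℕ) {s : ℝ} (hs : 0 < s) (r : ℝ) :
    HasDerivAt (fun u => hker d u r)
      (hker d s r * (-((d : ℝ) / (2 * s)) + r / (2 * s ^ 2))) s := by
  have h2πs : 0 < 2 * π * s := by positivity
  have h1 : HasDerivAt (fun u : ℝ => 2 * π * u) (2 * π) s := by
    simpa using (hasDerivAt_id s).const_mul (2 * π)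
  have hc : HasDerivAt (fun u : ℝ => (2 * π * u) ^ (-(d : ℝ) / 2))
      ((-(d : ℝ) / 2) * (2 * π * s) ^ (-(d : ℝ) / 2 - 1) * (2 * π)) s :=
    (Real.hasDerivAt_rpow_const (Or.inl h2πs.ne')).comp s h1
  have hc' : (-(d : ℝ) / 2) * (2 * π * s) ^ (-(d : ℝ) / 2 - 1) * (2 * π)
      = (2 * π * s) ^ (-(d : ℝ) / 2) * (-((d : ℝ) / (2 * s))) := by
    rw [Real.rpow_sub h2πs, Real.rpow_one]
    field_simp
  rw [hc'] at hc
  have hnum : HasDerivAt (fun u : ℝ => -(1 - u) * r) r s := by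
    have : HasDerivAt (fun u : ℝ => u * r - r) r s := by
      simpa using ((hasDerivAt_id s).mul_const r).sub_const r
    exact this.congr_of_eventuallyEq (Eventually.of_forall fun u => by ring)
  have hden : HasDerivAt (fun u : ℝ => 2 * u) 2 s := by
    simpa using (hasDerivAt_id s).const_mul (2 : ℝ)
  have he : HasDerivAt (fun u : ℝ => -(1 - u) * r / (2 * u))
      ((r * (2 * s) - -(1 - s) * r * 2) / (2 * s) ^ 2) s :=
    hnum.div hden (by positivity)
  have he' : (r * (2 * s) - -(1 - s) * r * 2) / (2 * s) ^ 2 = r / (2 * s ^ 2) := by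
    field_simp
    ring
  rw [he'] at he
  have := hc.mul he.exp
  exact (this.congr_of_eventuallyEq (Eventually.of_forall fun u => by unfold hker; rfl)).congr_deriv
    (by unfold hker; ring)

lemma hker_deriv_bound {d : ℕ} {t s r : ℝ} (ht₀ : 0 < t) (ht₁ : t < 1)
    (hs1 : t / 2 < s) (hs2 : s < (1 + t) / 2) (hr : 0 ≤ r) :
    ‖hker d s r * (-((d : ℝ) / (2 * s)) + r / (2 * s ^ 2))‖
      ≤ (π * t) ^ (-(d : ℝ) / 2)
        * ((d : ℝ) / t + 2 / (((1 - t) / (2 * (1 + t))) * t ^ 2)) := by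
  set a : ℝ := (1 - t) / (2 * (1 + t)) with ha_def
  have ha : 0 < a := div_pos (by linarith) (by linarith)
  have hs : 0 < s := lt_trans (by positivity) hs1
  have hs1' : s < 1 := by linarith
  have habs : |(-((d : ℝ) / (2 * s)) + r / (2 * s ^ 2))|
      ≤ (d : ℝ) / (2 * s) + r / (2 * s ^ 2) := by
    have h1 : 0 ≤ (d : ℝ) / (2 * s) := by positivity
    have h2 : 0 ≤ r / (2 * s ^ 2) := by positivity
    rw [abs_le]; constructor <;> linarith
  have hstep1 : ‖hker d s r * (-((d : ℝ) / (2 * s)) + r / (2 * s ^ 2))‖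
      ≤ hker d s r * ((d : ℝ) / (2 * s) + r / (2 * s ^ 2)) := by
    rw [Real.norm_eq_abs, abs_mul, abs_of_pos (hker_pos hs r)]
    exact mul_le_mul_of_nonneg_left habs (hker_pos hs r).le
  have h1 : (2 * π * s) ^ (-(d : ℝ) / 2) ≤ (π * t) ^ (-(d : ℝ) / 2) := by
    apply Real.rpow_le_rpow_of_nonpos (by positivity)
    · nlinarith [Real.pi_pos]
    · have : (0 : ℝ) ≤ (d : ℝ) := Nat.cast_nonneg d
      linarith
  have hexp_le_one : Real.exp (-(1 - s) * r / (2 * s)) ≤ 1 := by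
    rw [Real.exp_le_one_iff]
    have h0 : 0 ≤ (1 - s) * r := mul_nonneg (by linarith) hr
    apply div_nonpos_of_nonpos_of_nonneg (by nlinarith) (by positivity)
  have h2 : Real.exp (-(1 - s) * r / (2 * s)) * ((d : ℝ) / (2 * s)) ≤ (d : ℝ) / t := by
    calc Real.exp (-(1 - s) * r / (2 * s)) * ((d : ℝ) / (2 * s))
        ≤ 1 * ((d : ℝ) / (2 * s)) :=
          mul_le_mul_of_nonneg_right hexp_le_one (by positivity)
      _ = (d : ℝ) / (2 * s) := by ring
      _ ≤ (d : ℝ) / t := by gcongr <;> linarith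
  have hkey : a * (2 * s) ≤ 1 - s := by
    have e1 : a * (2 * s) ≤ a * (1 + t) := by
      have : 2 * s ≤ 1 + t := by linarith
      exact mul_le_mul_of_nonneg_left this ha.le
    have e2 : a * (1 + t) = (1 - t) / 2 := by
      rw [ha_def]; field_simp
    linarith
  have hae : Real.exp (-(1 - s) * r / (2 * s)) ≤ Real.exp (-(a * r)) := by
    apply Real.exp_le_exp.2
    rw [div_le_iff₀ (by positivity)]
    nlinarith [mul_le_mul_of_nonneg_right hkey hr]
  have hear : Real.exp (-(a * r)) * r ≤ 1 / a := by
    have h := Real.add_one_le_exp (a * r)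
    have hr2 : r ≤ Real.exp (a * r) / a := by
      rw [le_div_iff₀ ha]; nlinarith
    calc Real.exp (-(a * r)) * r ≤ Real.exp (-(a * r)) * (Real.exp (a * r) / a) :=
          mul_le_mul_of_nonneg_left hr2 (Real.exp_pos _).le
      _ = 1 / a := by
          rw [Real.exp_neg]
          field_simp
  have h3 : Real.exp (-(1 - s) * r / (2 * s)) * (r / (2 * s ^ 2)) ≤ 2 / (a * t ^ 2) := by
    calc Real.exp (-(1 - s) * r / (2 * s)) * (r / (2 * s ^ 2))
        = (Real.exp (-(1 - s) * r / (2 * s)) * r) * (1 / (2 * s ^ 2)) := by ring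
      _ ≤ (Real.exp (-(a * r)) * r) * (1 / (2 * s ^ 2)) :=
          mul_le_mul_of_nonneg_right (mul_le_mul_of_nonneg_right hae hr) (by positivity)
      _ ≤ (1 / a) * (1 / (2 * s ^ 2)) := mul_le_mul_of_nonneg_right hear (by positivity)
      _ ≤ (1 / a) * (2 / t ^ 2) := by
          apply mul_le_mul_of_nonneg_left ?_ (by positivity)
          rw [div_le_div_iff₀ (by positivity) (by positivity)]
          nlinarith
      _ = 2 / (a * t ^ 2) := by field_simp
  calc ‖hker d s r * (-((d : ℝ) / (2 * s)) + r / (2 * s ^ 2))‖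
      ≤ hker d s r * ((d : ℝ) / (2 * s) + r / (2 * s ^ 2)) := hstep1
    _ = (2 * π * s) ^ (-(d : ℝ) / 2)
        * (Real.exp (-(1 - s) * r / (2 * s)) * ((d : ℝ) / (2 * s))
          + Real.exp (-(1 - s) * r / (2 * s)) * (r / (2 * s ^ 2))) := by
        unfold hker; ring
    _ ≤ (π * t) ^ (-(d : ℝ) / 2) * ((d : ℝ) / t + 2 / (a * t ^ 2)) := by
        apply mul_le_mul h1 (add_le_add h2 h3) ?_ (by positivity)
        have e1 : 0 ≤ Real.exp (-(1 - s) * r / (2 * s)) * ((d : ℝ) / (2 * s)) := by positivity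
        have e2 : 0 ≤ Real.exp (-(1 - s) * r / (2 * s)) * (r / (2 * s ^ 2)) :=
          mul_nonneg (Real.exp_pos _).le (by positivity)
        linarith

lemma hker_comp_continuous (d : ℕ) (s : ℝ) (y : EuclideanSpace ℝ (Fin d)) :
    Continuous (fun x₀ : EuclideanSpace ℝ (Fin d) => hker d s (‖y - x₀‖ ^ 2)) := by
  have h1 : Continuous fun x₀ : EuclideanSpace ℝ (Fin d) => ‖y - x₀‖ ^ 2 :=
    (continuous_const.sub continuous_id).norm.pow 2
  unfold hker
  exact continuous_const.mul (Real.continuous_exp.comp ((continuous_const.mul h1).div_const (2 * s)))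

/-- **Claim 1.** For `g(t, y) := log ρ_t(√(1−t)·y)`, one has
`∂g/∂t (t, y) = −d/(2t) + (1/(2t²)) ∫ ‖y − x₀‖² p_{X₀|X_t}(dx₀ | √(1−t)·y)`,
where the conditional law of `X₀` given `X_t = x` has density
`heatKernel d t x x₀ / ρ_t(x)` with respect to the law `μ` of `X₀`. -/
theorem time_derivative_log_density
    (d : ℕ) (hd : 1 ≤ d) (μ : Measure (EuclideanSpace ℝ (Fin d))) [IsProbabilityMeasure μ]
    (t : ℝ) (ht₀ : 0 < t) (ht₁ : t < 1) (y : EuclideanSpace ℝ (Fin d)) :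
    deriv (fun s => Real.log (rho d μ s (Real.sqrt (1 - s) • y))) t
      = -(d / (2 * t))
        + (1 / (2 * t ^ 2)) *
          ∫ x₀, ‖y - x₀‖ ^ 2 *
            (heatKernel d t (Real.sqrt (1 - t) • y) x₀
              / rho d μ t (Real.sqrt (1 - t) • y)) ∂μ := by
  set G : EuclideanSpace ℝ (Fin d) → ℝ := fun x₀ => hker d t (‖y - x₀‖ ^ 2) with hG_def
  set F : ℝ → ℝ := fun s => ∫ x₀, hker d s (‖y - x₀‖ ^ 2) ∂μ with hF_def
  -- continuity / measurability of the integrand in x₀ for fixed s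
  have hmeas : ∀ s : ℝ, AEStronglyMeasurable (fun x₀ => hker d s (‖y - x₀‖ ^ 2)) μ := by
    intro s
    exact (hker_comp_continuous d s y).aestronglyMeasurable
  -- rho equals F near t
  have hrho_eq : ∀ s : ℝ, s ≤ 1 → rho d μ s (Real.sqrt (1 - s) • y) = F s := by
    intro s hs
    unfold rho
    exact integral_congr_ae (Eventually.of_forall fun x₀ => heatKernel_self hs y x₀)
  -- integrability of G
  have hG_int : Integrable G μ := by
    apply Integrable.mono' (integrable_const ((2 * π * t) ^ (-(d : ℝ) / 2))) (hmeas t)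
    filter_upwards with x₀
    rw [Real.norm_eq_abs, abs_of_pos (hker_pos ht₀ _)]
    exact hker_le ht₀ ht₁.le (by positivity)
  -- positivity of F t
  have hFt_pos : 0 < F t := by
    rw [hF_def]
    rw [integral_pos_iff_support_of_nonneg (fun x₀ => (hker_pos ht₀ _).le) hG_int]
    have : Function.support (fun x₀ : EuclideanSpace ℝ (Fin d) => hker d t (‖y - x₀‖ ^ 2))
        = Set.univ := by
      ext x₀; simp [(hker_pos ht₀ (‖y - x₀‖ ^ 2)).ne']
    rw [this]
    simp
  -- derivative of F via dominated convergence
  set ε : ℝ := min (t / 2) ((1 - t) / 2) with hε_def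
  have hε : 0 < ε := by
    apply lt_min <;> linarith
  have hball : ∀ s ∈ Metric.ball t ε, t / 2 < s ∧ s < (1 + t) / 2 := by
    intro s hsb
    rw [Metric.mem_ball, Real.dist_eq, abs_lt] at hsb
    have e1 : ε ≤ t / 2 := min_le_left _ _
    have e2 : ε ≤ (1 - t) / 2 := min_le_right _ _
    constructor <;> linarith [hsb.1, hsb.2]
  have hDer := hasDerivAt_integral_of_dominated_loc_of_deriv_le (μ := μ)
      (F := fun s x₀ => hker d s (‖y - x₀‖ ^ 2))
      (F' := fun s x₀ => hker d s (‖y - x₀‖ ^ 2)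
        * (-((d : ℝ) / (2 * s)) + ‖y - x₀‖ ^ 2 / (2 * s ^ 2)))
      (bound := fun _ => (π * t) ^ (-(d : ℝ) / 2)
        * ((d : ℝ) / t + 2 / (((1 - t) / (2 * (1 + t))) * t ^ 2)))
      (Metric.ball_mem_nhds t hε) (Eventually.of_forall fun s => hmeas s) hG_int
      ?_ ?_ (integrable_const _) ?_
  · obtain ⟨hF'_int, hF'⟩ := hDer
    -- log derivative
    have hlogF : HasDerivAt (fun s => Real.log (F s))
        ((∫ x₀, hker d t (‖y - x₀‖ ^ 2)
          * (-((d : ℝ) / (2 * t)) + ‖y - x₀‖ ^ 2 / (2 * t ^ 2)) ∂μ) / F t) t :=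
      hF'.log hFt_pos.ne'
    have hev : (fun s => Real.log (rho d μ s (Real.sqrt (1 - s) • y)))
        =ᶠ[nhds t] (fun s => Real.log (F s)) := by
      filter_upwards [Iio_mem_nhds ht₁] with s hs
      rw [hrho_eq s (le_of_lt hs)]
    have hmain : HasDerivAt (fun s => Real.log (rho d μ s (Real.sqrt (1 - s) • y)))
        ((∫ x₀, hker d t (‖y - x₀‖ ^ 2)
          * (-((d : ℝ) / (2 * t)) + ‖y - x₀‖ ^ 2 / (2 * t ^ 2)) ∂μ) / F t) t :=
      hlogF.congr_of_eventuallyEq hev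
    rw [hmain.deriv]
    -- algebra: split the integral
    have hprod_int : Integrable (fun x₀ => ‖y - x₀‖ ^ 2 * G x₀) μ := by
      have : Integrable (fun x₀ =>
          (hker d t (‖y - x₀‖ ^ 2) * (-((d : ℝ) / (2 * t)) + ‖y - x₀‖ ^ 2 / (2 * t ^ 2))
            + ((d : ℝ) / (2 * t)) * G x₀) * (2 * t ^ 2)) μ :=
        (hF'_int.add (hG_int.const_mul _)).mul_const _
      apply this.congr
      filter_upwards with x₀
      rw [hG_def]
      field_simp
      ring
    have hsplit : (∫ x₀, hker d t (‖y - x₀‖ ^ 2)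
          * (-((d : ℝ) / (2 * t)) + ‖y - x₀‖ ^ 2 / (2 * t ^ 2)) ∂μ)
        = -((d : ℝ) / (2 * t)) * F t
          + (1 / (2 * t ^ 2)) * ∫ x₀, ‖y - x₀‖ ^ 2 * G x₀ ∂μ := by
      have : (fun x₀ : EuclideanSpace ℝ (Fin d) => hker d t (‖y - x₀‖ ^ 2)
          * (-((d : ℝ) / (2 * t)) + ‖y - x₀‖ ^ 2 / (2 * t ^ 2)))
          = fun x₀ => (-((d : ℝ) / (2 * t))) * G x₀
            + (1 / (2 * t ^ 2)) * (‖y - x₀‖ ^ 2 * G x₀) := by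
        funext x₀
        rw [hG_def]
        field_simp
      rw [this, integral_add ((hG_int.const_mul _)) ((hprod_int.const_mul _)),
        integral_const_mul, integral_const_mul, hF_def]
    rw [hsplit]
    have hrw : ∫ x₀, ‖y - x₀‖ ^ 2 *
        (heatKernel d t (Real.sqrt (1 - t) • y) x₀
          / rho d μ t (Real.sqrt (1 - t) • y)) ∂μ
        = (∫ x₀, ‖y - x₀‖ ^ 2 * G x₀ ∂μ) / F t := by
      rw [← integral_div]
      apply integral_congr_ae
      filter_upwards with x₀
      rw [heatKernel_self ht₁.le, hrho_eq t ht₁.le, hG_def]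
      ring
    rw [hrw]
    field_simp
  · apply Continuous.aestronglyMeasurable
    exact (hker_comp_continuous d t y).mul
      (continuous_const.add ((((continuous_const.sub continuous_id).norm.pow 2)).div_const (2 * t ^ 2)))
  · filter_upwards with x₀ s hsb
    obtain ⟨h1, h2⟩ := hball s hsb
    exact hker_deriv_bound ht₀ ht₁ h1 h2 (by positivity)
  · filter_upwards with x₀ s hsb
    obtain ⟨h1, h2⟩ := hball s hsb
    exact hasDerivAt_hker d (by linarith) _
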